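/- For x ≥ 80, the real number y = y(x) > 1 defined by (y² − y)/log y = x/log x satisfies y(x) ≤ √(x/2). -/

import Mathlib

/-- Standard lower bound for log. -/
lemma my_log_gt (t : ℝ) (ht : 1 < t) : 1 - 1/t < Real.log t := by
  have ht0 : 0 < t := by linarith
  have hne : -Real.log t ≠ 0 := by
    have := Real.log_pos ht; intro h0; linarith [h0]
  have := Real.add_one_lt_exp hne
  rw [Real.exp_neg, Real.exp_log ht0] at this
  have h1 : (1:ℝ)/t = t⁻¹ := one_div t
  linarith [this, h1 ▸ this]

/-- f is strictly monotone on (1, ∞). -/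
lemma my_f_mono : StrictMonoOn (fun t : ℝ => (t^2 - t) / Real.log t) (Set.Ioi 1) := by
  have hderiv : ∀ t ∈ Set.Ioi (1:ℝ), HasDerivAt (fun t : ℝ => (t^2 - t)/Real.log t)
      (((2*t - 1) * Real.log t - (t^2 - t) * t⁻¹) / (Real.log t)^2) t := by
    intro t ht
    have ht1 : (1:ℝ) < t := ht
    have ht0 : (0:ℝ) < t := by linarith
    have hlog : Real.log t ≠ 0 := ne_of_gt (Real.log_pos ht1)
    have h1 : HasDerivAt (fun t : ℝ => t^2 - t) (2*t - 1) t := by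
      have h2 := (hasDerivAt_pow 2 t).sub (hasDerivAt_id t)
      have h3 : HasDerivAt (fun t : ℝ => t^2 - t) _ t := ((hasDerivAt_id' t).pow 2).sub (hasDerivAt_id' t)
      convert h3 using 1; simp
    exact h1.div (Real.hasDerivAt_log (ne_of_gt ht0)) hlog
  apply strictMonoOn_of_deriv_pos (convex_Ioi 1)
  · intro t ht
    exact ((hderiv t ht).continuousAt).continuousWithinAt
  · intro t ht
    rw [interior_Ioi] at ht
    rw [(hderiv t ht).deriv]
    have ht1 : (1:ℝ) < t := ht
    have hlogpos : 0 < Real.log t := Real.log_pos ht1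
    have hlb : 1 - 1/t < Real.log t := my_log_gt t ht1
    have ht0 : (0:ℝ) < t := by linarith
    apply div_pos _ (by positivity)
    have heq : (t^2 - t) * t⁻¹ = t - 1 := by field_simp
    rw [heq]
    have hmul : (2*t - 1) * (1 - 1/t) < (2*t - 1) * Real.log t :=
      mul_lt_mul_of_pos_left hlb (by linarith)
    have hval : (2*t - 1) * (1 - 1/t) - (t - 1) = (t-1)^2 / t := by
      field_simp; ring
    have hpos : 0 ≤ (t-1)^2 / t := by positivity
    linarith

lemma my_log54 : Real.log (5/4) ≤ 0.2245 := by
  rw [Real.log_le_iff_le_exp (by norm_num)]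
  have h1 : (1 + 0.2245/32 : ℝ)^(32:ℕ) ≤ Real.exp 0.2245 := by
    have h0 := Real.add_one_le_exp (0.2245/32 : ℝ)
    calc (1 + 0.2245/32 : ℝ)^(32:ℕ) ≤ (Real.exp (0.2245/32))^(32:ℕ) := by
          apply pow_le_pow_left₀ (by norm_num) (by linarith)
        _ = Real.exp 0.2245 := by
          rw [← Real.exp_nat_mul]; norm_num
  have h2 : (5/4:ℝ) ≤ (1 + 0.2245/32 : ℝ)^(32:ℕ) := by norm_num
  linarith

lemma my_sqrt40 : (6.3245:ℝ) ≤ Real.sqrt 40 := by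
  have := Real.sqrt_le_sqrt (show (6.3245:ℝ)^2 ≤ 40 by norm_num)
  rwa [Real.sqrt_sq (by norm_num)] at this

lemma my_key (s : ℝ) (hs : Real.sqrt 40 ≤ s) : 2 * Real.log s ≤ (s - 1) * Real.log 2 := by
  set a := Real.sqrt 40 with ha_def
  have ha : (6.3245:ℝ) ≤ a := my_sqrt40
  have ha0 : (0:ℝ) < a := by linarith
  have hs0 : (0:ℝ) < s := by linarith
  have hlog2l : (0.6931471803:ℝ) < Real.log 2 := Real.log_two_gt_d9
  have hlog2u : Real.log 2 < 0.6931471808 := Real.log_two_lt_d9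
  have hlogs : a * Real.log s ≤ a * Real.log a + (s - a) := by
    have hd := Real.log_le_sub_one_of_pos (show (0:ℝ) < s/a from div_pos hs0 ha0)
    have hsa : Real.log (s/a) = Real.log s - Real.log a :=
      Real.log_div (ne_of_gt hs0) (ne_of_gt ha0)
    rw [hsa] at hd
    have := mul_le_mul_of_nonneg_left hd (le_of_lt ha0)
    have hda : a * (s/a - 1) = s - a := by field_simp
    nlinarith [this]
  have hloga : 2 * Real.log a = Real.log 40 := by
    rw [ha_def, Real.log_sqrt (by norm_num)]; ring
  have hlog40 : Real.log 40 = 5 * Real.log 2 + Real.log (5/4) := by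
    rw [show (40:ℝ) = 2^5 * (5/4) by norm_num,
      Real.log_mul (by norm_num) (by norm_num), Real.log_pow]
    push_cast; ring
  have h54 : Real.log (5/4) ≤ 0.2245 := my_log54
  have key1 : Real.log 40 ≤ (a - 1) * Real.log 2 := by nlinarith
  have h2a : (2:ℝ) ≤ Real.log 2 * a := by nlinarith
  have key2 : 2 * (s - a) ≤ (s - a) * Real.log 2 * a := by
    have := mul_le_mul_of_nonneg_left h2a (show (0:ℝ) ≤ s - a by linarith)
    nlinarith [this]
  -- 2 a log s ≤ 2 a log a + 2(s-a) = a log40 + 2(s-a) ≤ a (a-1) log2 + a(s-a)log2 = a(s-1)log2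
  have : a * (2 * Real.log s) ≤ a * ((s-1) * Real.log 2) := by nlinarith
  exact le_of_mul_le_mul_left (by linarith) ha0

theorem y_le_sqrt_half (x y : ℝ) (hx : 80 ≤ x) (hy : 1 < y)
    (h : (y ^ 2 - y) / Real.log y = x / Real.log x) :
    y ≤ Real.sqrt (x / 2) := by
  by_contra hc
  push_neg at hc
  set s := Real.sqrt (x/2) with hs_def
  have hx0 : (0:ℝ) < x := by linarith
  have hx2 : (0:ℝ) ≤ x/2 := by linarith
  have hs2 : s^2 = x/2 := Real.sq_sqrt hx2
  have h40 : Real.sqrt 40 ≤ s := Real.sqrt_le_sqrt (by linarith)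
  have h6 : (6.3245:ℝ) ≤ Real.sqrt 40 := my_sqrt40
  have hs1 : (1:ℝ) < s := by linarith
  have hlogs : 0 < Real.log s := Real.log_pos hs1
  have hlogx : 0 < Real.log x := Real.log_pos (by linarith)
  have hxe : x = 2 * s^2 := by rw [hs2]; ring
  have hlogx_eq : Real.log x = Real.log 2 + 2 * Real.log s := by
    rw [hxe, Real.log_mul two_ne_zero (by positivity), Real.log_pow]
    push_cast; ring
  have hkey : 2 * Real.log s ≤ (s - 1) * Real.log 2 := my_key s h40
  have hsl : Real.log x ≤ s * Real.log 2 := by nlinarith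
  have hfs : x / Real.log x ≤ (s^2 - s) / Real.log s := by
    rw [div_le_div_iff₀ hlogx hlogs]
    have hls : Real.log s = (Real.log x - Real.log 2)/2 := by linarith
    rw [hls]
    have hsx : s * Real.log x ≤ s * (s * Real.log 2) :=
      mul_le_mul_of_nonneg_left hsl (by linarith)
    nlinarith [hsx]
  have hmono := my_f_mono (Set.mem_Ioi.mpr hs1) (Set.mem_Ioi.mpr hy) hc
  simp only at hmono
  rw [h] at hmono
  linarith
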